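/- arXiv:1105.0749 — 4 statements merged into one kernel-verified Lean document; each statement's English description precedes it below -/
import Mathlib

section
/- Let M_A, M_B, M_{B'}, g_A, g_B, h, c be real numbers with c ≠ 0, g_B ≠ 0, and M_B ≠ M_A, satisfying the energy conservation relation M_A g_A h + M_{B'} c² = M_B c² + M_B g_B h. Then the fractional frequency shift δν/ν := (M_{B'} − M_B)/(M_B − M_A) satisfies δν/ν = (g_B h/c²)·[ 1 + (M_A/(M_B − M_A))·((g_B − g_A)/g_B) ]. Consequently the anomalous redshift parameter α defined by δν/ν = (1 + α)·g_B h/c² equals α = (M_A/(M_B − M_A))·((g_B − g_A)/g_B). -/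
/-- Nordtvedt's gedanken experiment.  Energy conservation
`M_A g_A h + M_B' c² = M_B c² + M_B g_B h` implies the fractional frequency
shift `δν/ν = (M_B' − M_B)/(M_B − M_A)` equals
`(g_B h/c²)·[1 + (M_A/(M_B−M_A))·((g_B−g_A)/g_B)]`, and hence the anomalous
redshift parameter `α = (M_A/(M_B−M_A))·((g_B−g_A)/g_B)` satisfies
`δν/ν = (1+α)·g_B h/c²`. -/
theorem stmt_6 (MA MB MB' gA gB h c : ℝ) (hc : c ≠ 0) (hgB : gB ≠ 0)
    (hM : MB ≠ MA)
    (hcons : MA * gA * h + MB' * c ^ 2 = MB * c ^ 2 + MB * gB * h) :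
    (MB' - MB) / (MB - MA) =
      (gB * h / c ^ 2) * (1 + (MA / (MB - MA)) * ((gB - gA) / gB)) ∧
    ∀ α : ℝ, α = (MA / (MB - MA)) * ((gB - gA) / gB) →
      (MB' - MB) / (MB - MA) = (1 + α) * (gB * h / c ^ 2) := by
  have hMM : MB - MA ≠ 0 := sub_ne_zero.mpr hM
  have key : (MB' - MB) / (MB - MA) =
      (gB * h / c ^ 2) * (1 + (MA / (MB - MA)) * ((gB - gA) / gB)) := by
    field_simp
    linear_combination hcons
  exact ⟨key, fun α hα => by rw [hα, key]; ring⟩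
end

section
/- Let m_i, m_g, g > 0, ĝ ∈ ℝ, T > 0, and define S(z_b, t_b; z_a, t_a) := (m_i/2)·(z_b − z_a)²/(t_b − t_a) − (m_g g/2)·(z_b + z_a)·(t_b − t_a) + (ĝ/24)·(t_b − t_a)³·(m_i ĝ − 2 m_g g) for t_a < t_b. Then for any z_A, z_B, z_C, z_D ∈ ℝ, the action difference along the two interferometer paths, ΔS := [S(z_C, T; z_A, 0) + S(z_D, 2T; z_C, T)] − [S(z_B, T; z_A, 0) + S(z_D, 2T; z_B, T)], equals ΔS = (m_i/T)·(z_C − z_B)·[ z_B + z_C − z_A − z_D − g·(m_g/m_i)·T² ]. In particular ΔS does not depend on ĝ. -/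
/-- the action difference along the two interferometer paths
`ΔS = [S(C;A) + S(D;C)] − [S(B;A) + S(D;B)]` equals
`(m_i/T)(z_C − z_B)[z_B + z_C − z_A − z_D − g(m_g/m_i)T²]`; in particular it
does not depend on `ĝ` (here `gh`). -/
theorem stmt_9 (mi mg g gh T : ℝ) (hmi : 0 < mi) (hmg : 0 < mg) (hg : 0 < g)
    (hT : 0 < T)
    (S : ℝ → ℝ → ℝ → ℝ → ℝ)
    (hS : ∀ zb tb za ta, S zb tb za ta =
      (mi / 2) * (zb - za) ^ 2 / (tb - ta)
        - (mg * g / 2) * (zb + za) * (tb - ta)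
        + (gh / 24) * (tb - ta) ^ 3 * (mi * gh - 2 * mg * g)) :
    ∀ zA zB zC zD : ℝ,
      (S zC T zA 0 + S zD (2 * T) zC T) - (S zB T zA 0 + S zD (2 * T) zB T) =
        (mi / T) * (zC - zB) * (zB + zC - zA - zD - g * (mg / mi) * T ^ 2) := by
  intro zA zB zC zD
  simp only [hS]
  have h1 : T - 0 = T := by ring
  have h2 : 2 * T - T = T := by ring
  rw [h1, h2]
  field_simp
  ring
end

section
/- Let m_i, m_g, g, ℏ, κ > 0, ĝ ∈ ℝ, T > 0, and let z_A, z_B, z_C, z_D ∈ ℝ satisfy z_B + z_C − z_A − z_D = ĝT² and z_C − z_B = (ℏκ/m_i)T. Define the free-propagation phase difference Δφ_free := ΔS/ℏ where ΔS = (m_i/T)(z_C − z_B)[z_B + z_C − z_A − z_D − g(m_g/m_i)T²], and the laser-interaction phase difference Δφ_light := −κ·(z_B + z_C − z_A − z_D). Then Δφ_light = −κ ĝ T², and the total phase difference Δφ := Δφ_free + Δφ_light equals Δφ = −(m_g/m_i)·g·κ·T², independently of ĝ. -/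
/-- the total interferometer phase difference.  Given
`z_B + z_C − z_A − z_D = ĝT²` and `z_C − z_B = (ℏκ/m_i)T`, the laser phase is
`Δφ_light = −κĝT²` and the total phase is
`Δφ = Δφ_free + Δφ_light = −(m_g/m_i)·g·κ·T²`, independently of `ĝ` (= `gh`). -/
theorem stmt_11 (mi mg g hbar κ : ℝ) (gh T : ℝ)
    (hmi : 0 < mi) (hmg : 0 < mg) (hg : 0 < g) (hhbar : 0 < hbar)
    (hκ : 0 < κ) (hT : 0 < T)
    (zA zB zC zD : ℝ)
    (h1 : zB + zC - zA - zD = gh * T ^ 2)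
    (h2 : zC - zB = (hbar * κ / mi) * T)
    (Δφfree Δφlight : ℝ)
    (hfree : Δφfree =
      ((mi / T) * (zC - zB) * (zB + zC - zA - zD - g * (mg / mi) * T ^ 2)) / hbar)
    (hlight : Δφlight = -κ * (zB + zC - zA - zD)) :
    Δφlight = -κ * gh * T ^ 2 ∧
    Δφfree + Δφlight = -(mg / mi) * g * κ * T ^ 2 := by
  constructor
  · rw [hlight, h1]; ring
  · rw [hfree, hlight, h1, h2]
    field_simp
    ring
end

section
/- Let g, T > 0 and let m_{i1}, m_{i2}, m_{g1}, m_{g2} > 0 be the inertial and gravitational masses of an atom in its two internal states. Set ĝ₁ := (m_{g1}/m_{i1})·g, ĝ₂ := (m_{g2}/m_{i2})·g, and Δz_D := T²·( (m_{i2}/m_{i1})·ĝ₂ − (m_{i1}/m_{i2})·ĝ₁ ). Then Δz_D = (m_{i2} m_{g2} − m_{i1} m_{g1})·g·T²/(m_{i1} m_{i2}), and Δz_D = 0 if and only if m_{i2}·m_{g2} = m_{i1}·m_{g1}, i.e. if and only if the product (rather than the quotient) of inertial and gravitational mass is the same in the two internal states. -/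
/-- with state-dependent free-fall accelerations
`ĝ₁ = (m_{g1}/m_{i1})g`, `ĝ₂ = (m_{g2}/m_{i2})g` and
`Δz_D = T²((m_{i2}/m_{i1})ĝ₂ − (m_{i1}/m_{i2})ĝ₁)`, one has
`Δz_D = (m_{i2}m_{g2} − m_{i1}m_{g1})gT²/(m_{i1}m_{i2})`, and `Δz_D = 0` iff
the product of inertial and gravitational mass agrees in the two states. -/
theorem stmt_18 (g T mi1 mi2 mg1 mg2 : ℝ)
    (hg : 0 < g) (hT : 0 < T)
    (hmi1 : 0 < mi1) (hmi2 : 0 < mi2) (hmg1 : 0 < mg1) (hmg2 : 0 < mg2)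
    (gh1 gh2 ΔzD : ℝ)
    (hgh1 : gh1 = (mg1 / mi1) * g)
    (hgh2 : gh2 = (mg2 / mi2) * g)
    (hΔ : ΔzD = T ^ 2 * ((mi2 / mi1) * gh2 - (mi1 / mi2) * gh1)) :
    ΔzD = (mi2 * mg2 - mi1 * mg1) * g * T ^ 2 / (mi1 * mi2) ∧
    (ΔzD = 0 ↔ mi2 * mg2 = mi1 * mg1) := by
  have h1 : ΔzD = (mi2 * mg2 - mi1 * mg1) * g * T ^ 2 / (mi1 * mi2) := by
    subst hgh1 hgh2 hΔ
    field_simp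
  refine ⟨h1, ?_⟩
  rw [h1, div_eq_zero_iff]
  constructor
  · rintro (h | h)
    · rcases mul_eq_zero.mp h with h' | h'
      · rcases mul_eq_zero.mp h' with h'' | h''
        · linarith [mul_pos hg (pow_pos hT 2), sub_eq_zero.mp h'']
        · exact absurd h'' hg.ne'
      · exact absurd h' (pow_pos hT 2).ne'
    · exact absurd h (mul_pos hmi1 hmi2).ne'
  · intro h; left; rw [h]; ring
end
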